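/- Let Λ and M be symmetric N×N real matrices and n ≥ 1. If the matrices nΛ + 2M and M are positive semidefinite, then for any collection of symmetric n×n real matrices D₁,…,D_N, the quantity Σᵢ Σⱼ (λᵢⱼ (tr Dⱼ)(tr Dᵢ) + 2 μᵢⱼ (Dⱼ : Dᵢ)) is nonnegative, where A : B = Σₖₗ AₖₗBₖₗ is the Frobenius inner product. -/

import Mathlib

private lemma swap3 {α β γ : Type*} [Fintype α] [Fintype β] [Fintype γ]
    (g : α → β → γ → ℝ) :
    ∑ a, ∑ b, ∑ c, g a b c = ∑ c, ∑ a, ∑ b, g a b c := by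
  have h1 : ∀ a, ∑ b, ∑ c, g a b c = ∑ c, ∑ b, g a b c := fun a => Finset.sum_comm
  simp only [h1]
  exact Finset.sum_comm

/-- Dissipation inequality (Second law of thermodynamics) for the multi-fluid
viscous stress: if nΛ+2M and M are positive semidefinite symmetric viscosity
matrices, then Σᵢ Sᵢ : D(uᵢ) ≥ 0. -/
theorem stmt0 (N n : ℕ) (hn : 1 ≤ n)
    (Λ M : Matrix (Fin N) (Fin N) ℝ)
    (hΛsymm : Λ.IsSymm) (hMsymm : M.IsSymm)
    (h1 : ((n : ℝ) • Λ + 2 • M).PosSemidef) (h2 : M.PosSemidef)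
    (D : Fin N → Matrix (Fin n) (Fin n) ℝ)
    (hD : ∀ i, (D i).IsSymm) :
    0 ≤ ∑ i, ∑ j, (Λ i j * (D j).trace * (D i).trace
      + 2 * M i j * ∑ k, ∑ l, D j k l * D i k l) := by
  have hn' : (0:ℝ) < n := by exact_mod_cast Nat.lt_of_lt_of_le Nat.zero_lt_one hn
  set t : Fin N → ℝ := fun i => (D i).trace with ht
  set E : Fin N → Matrix (Fin n) (Fin n) ℝ :=
    fun i => Matrix.of fun k l => D i k l - (t i / n) * (if k = l then 1 else 0) with hE
  -- Frobenius identity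
  have hfrob : ∀ i j, (∑ k, ∑ l, D j k l * D i k l)
      = (∑ k, ∑ l, E j k l * E i k l) + t i * t j / n := by
    intro i j
    have hδD : ∀ m : Fin N, (∑ k, ∑ l, (if k = l then (1:ℝ) else 0) * D m k l) = t m := by
      intro m
      have h : ∀ k : Fin n, (∑ l, (if k = l then (1:ℝ) else 0) * D m k l) = D m k k := by
        intro k; simp
      simp only [h]
      rfl
    have hδδ : (∑ k : Fin n, ∑ l : Fin n,
        (if k = l then (1:ℝ) else 0) * (if k = l then (1:ℝ) else 0)) = n := by
      simp
    have expand : ∀ k l, E j k l * E i k l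
        = D j k l * D i k l
          - (t j / n) * ((if k = l then (1:ℝ) else 0) * D i k l)
          - (t i / n) * ((if k = l then (1:ℝ) else 0) * D j k l)
          + (t i / n) * (t j / n) * ((if k = l then (1:ℝ) else 0) * (if k = l then (1:ℝ) else 0)) := by
      intro k l; simp only [hE, Matrix.of_apply]; ring
    simp only [expand, Finset.sum_add_distrib, Finset.sum_sub_distrib, ← Finset.mul_sum,
      hδD, hδδ]
    field_simp
    ring
  -- Rewrite the total sum as two quadratic forms
  have key : (∑ i, ∑ j, (Λ i j * (D j).trace * (D i).trace
      + 2 * M i j * ∑ k, ∑ l, D j k l * D i k l))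
      = (∑ i, ∑ j, ((n:ℝ) * Λ i j + 2 * M i j) * t i * t j) / n
        + 2 * ∑ k, ∑ l, ∑ i, E i k l * ∑ j, M i j * E j k l := by
    have step1 : ∀ i j, (Λ i j * (D j).trace * (D i).trace
        + 2 * M i j * ∑ k, ∑ l, D j k l * D i k l)
        = (((n:ℝ) * Λ i j + 2 * M i j) * t i * t j) / n
          + 2 * ∑ k, ∑ l, M i j * (E j k l * E i k l) := by
      intro i j
      rw [hfrob,
        show (∑ k, ∑ l, M i j * (E j k l * E i k l)) = M i j * ∑ k, ∑ l, E j k l * E i k l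
          from by simp [Finset.mul_sum]]
      show Λ i j * t j * t i + _ = _
      field_simp
      ring
    simp only [step1, Finset.sum_add_distrib, ← Finset.sum_div, ← Finset.mul_sum]
    congr 1
    congr 1
    simp only [Finset.mul_sum]
    rw [swap3 (fun i j k => ∑ l, M i j * (E j k l * E i k l))]
    refine Finset.sum_congr rfl fun k _ => ?_
    rw [swap3 (fun i j l => M i j * (E j k l * E i k l))]
    refine Finset.sum_congr rfl fun l _ => ?_
    rw [Finset.sum_comm]
    refine Finset.sum_congr rfl fun i _ => Finset.sum_congr rfl fun j _ => ?_
    rw [hMsymm.apply i j]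
    ring
  rw [key]
  have hq1 : 0 ≤ ∑ i, ∑ j, ((n:ℝ) * Λ i j + 2 * M i j) * t i * t j := by
    have h := h1.dotProduct_mulVec_nonneg t
    simp only [star_trivial, dotProduct, Matrix.mulVec, Matrix.add_apply,
      Matrix.smul_apply] at h
    simp only [smul_eq_mul, nsmul_eq_mul] at h
    refine le_trans h (le_of_eq ?_)
    refine Finset.sum_congr rfl fun i _ => ?_
    rw [Finset.mul_sum]
    refine Finset.sum_congr rfl fun j _ => ?_
    push_cast
    ring
  have hq2 : ∀ (k l : Fin n), 0 ≤ ∑ i, E i k l * ∑ j, M i j * E j k l := by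
    intro k l
    have h := h2.dotProduct_mulVec_nonneg (fun i => E i k l)
    simpa [Matrix.mulVec, dotProduct] using h
  have hB : 0 ≤ ∑ k, ∑ l, ∑ i, E i k l * ∑ j, M i j * E j k l :=
    Finset.sum_nonneg fun k _ => Finset.sum_nonneg fun l _ => hq2 k l
  positivity
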